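/- Norm bound for the Rubio de Francia operator: Let 1 ≤ r₀ < r < ∞, s := (r−r₀)/(r−1) ∈ (0,1], θ ≥ 0, γ := rθ, and w ∈ A_r^{ρ,θ}(ℝⁿ). Define R(g) := [M_γ(g^{1/s} w) w^{−1}]^s for non-negative g ∈ L^{r/(r−r₀)}(w). Assuming the maximal bound ‖M_γ(h)‖_{L^{r'}(σ)} ≤ c [σ]_{A_{r'}^{ρ,θ}}^{1/(r'−1)} ‖h‖_{L^{r'}(σ)} for σ := w^{−1/(r−1)} ∈ A_{r'}^{ρ,θ}, one has ‖R(g)‖_{L^{r/(r−r₀)}(w)} ≤ C [w]_{A_r^{ρ,θ}}^s ‖g‖_{L^{r/(r−r₀)}(w)}. -/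

import Mathlib

open MeasureTheory Metric Set
open scoped ENNReal NNReal

noncomputable section

/-- `ℝⁿ`. -/
abbrev Rn (n : ℕ) := EuclideanSpace ℝ (Fin n)

/-- The quantity inside the supremum defining the adapted Muckenhoupt constant
`[w]_{A_p^{ρ,θ}}`, for the ball `B(x,r)`. -/
def apTerm (n : ℕ) (p θ : ℝ) (ρ w : Rn n → ℝ) (x : Rn n) (r : ℝ) : ℝ :=
  (((1 + r / ρ x) ^ θ * (volume (ball x r)).toReal)⁻¹ * ∫ y in ball x r, w y) *
    ((((1 + r / ρ x) ^ θ * (volume (ball x r)).toReal)⁻¹ *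
        ∫ y in ball x r, (w y) ^ (-(1 : ℝ) / (p - 1))) ^ (p - 1))

/-- The adapted Muckenhoupt constant `[w]_{A_p^{ρ,θ}}`, as a supremum over all balls. -/
def apConst (n : ℕ) (p θ : ℝ) (ρ w : Rn n → ℝ) : ℝ≥0∞ :=
  ⨆ (x : Rn n) (r : ℝ) (_ : 0 < r), ENNReal.ofReal (apTerm n p θ ρ w x r)

/-- The weighted Lebesgue norm `‖g‖_{L^q(w)}` (via a lower integral). -/
def wNorm (n : ℕ) (q : ℝ) (w g : Rn n → ℝ) : ℝ≥0∞ :=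
  (∫⁻ x, ENNReal.ofReal |g x| ^ q * ENNReal.ofReal (w x)) ^ (1 / q)

/-- The adapted (Hardy–Littlewood type) maximal function
`M_γ f (x) = sup_{B ∋ x} (Ψ_γ(B)|B|)⁻¹ ∫_B |f|` with `Ψ_γ(B) = (1+r_B/ρ(x_B))^γ`. -/
def adaptedMaximal (n : ℕ) (γ : ℝ) (ρ f : Rn n → ℝ) (x : Rn n) : ℝ≥0∞ :=
  ⨆ (z : Rn n) (r : ℝ) (_ : 0 < r) (_ : x ∈ ball z r),
    (ENNReal.ofReal ((1 + r / ρ z) ^ γ) * volume (ball z r))⁻¹ *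
      ∫⁻ y in ball z r, ENNReal.ofReal |f y|

lemma rdf_aux (A B e : ℝ) (hA : 0 ≤ A) (hB : 0 ≤ B) (he : 0 < e) :
    B * A ^ (1/e) = (A * B ^ e) ^ (1/e) := by
  rw [Real.mul_rpow hA (Real.rpow_nonneg hB e), ← Real.rpow_mul hB,
    mul_one_div_cancel (ne_of_gt he), Real.rpow_one, mul_comm]


/-- Norm bound for the Rubio de Francia operator
`R(g) := [M_γ(g^{1/s} w) w^{−1}]^s`, `s := (r−r₀)/(r−1)`, `γ := rθ`:
assuming the quantitative `L^{r'}(σ)` maximal bound for `σ := w^{−1/(r−1)}`,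
one has `‖R(g)‖_{L^{r/(r−r₀)}(w)} ≤ C [w]_{A_r^{ρ,θ}}^s ‖g‖_{L^{r/(r−r₀)}(w)}`. -/
theorem rubio_de_francia_operator_norm (n : ℕ) (r₀ r θ c₀ : ℝ) (ρ : Rn n → ℝ)
    (hρ : ∀ x, 0 < ρ x) (h1 : 1 ≤ r₀) (h2 : r₀ < r) (hθ : 0 ≤ θ) (hc₀ : 0 < c₀) :
    ∃ C > (0 : ℝ), ∀ w g : Rn n → ℝ, (∀ x, 0 ≤ w x) → apConst n r θ ρ w < ⊤ →
      (∀ x, 0 ≤ g x) →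
      apConst n (r / (r - 1)) θ ρ (fun x => (w x) ^ (-(1 : ℝ) / (r - 1))) < ⊤ →
      (∀ h : Rn n → ℝ,
        (∫⁻ x, adaptedMaximal n (r * θ) ρ h x ^ (r / (r - 1)) *
            ENNReal.ofReal ((w x) ^ (-(1 : ℝ) / (r - 1)))) ^ ((r - 1) / r) ≤
          ENNReal.ofReal c₀ *
            apConst n (r / (r - 1)) θ ρ (fun x => (w x) ^ (-(1 : ℝ) / (r - 1))) ^
              (1 / (r / (r - 1) - 1)) *
            (∫⁻ x, ENNReal.ofReal |h x| ^ (r / (r - 1)) *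
              ENNReal.ofReal ((w x) ^ (-(1 : ℝ) / (r - 1)))) ^ ((r - 1) / r)) →
      wNorm n (r / (r - r₀)) w
          (fun x =>
            ((adaptedMaximal n (r * θ) ρ
                  (fun y => (g y) ^ ((r - 1) / (r - r₀)) * w y) x).toReal *
                (w x)⁻¹) ^ ((r - r₀) / (r - 1))) ≤
        ENNReal.ofReal C * apConst n r θ ρ w ^ ((r - r₀) / (r - 1)) *
          wNorm n (r / (r - r₀)) w g := by
  have hr1 : (1:ℝ) < r := lt_of_le_of_lt h1 h2
  have hr1' : (0:ℝ) < r - 1 := by linarith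
  have hne : r - 1 ≠ 0 := ne_of_gt hr1'
  have hrr0 : (0:ℝ) < r - r₀ := by linarith
  have hrr0' : r - r₀ ≠ 0 := ne_of_gt hrr0
  have hr : (0:ℝ) < r := by linarith
  have hrne : r ≠ 0 := ne_of_gt hr
  have hs : (0:ℝ) < (r - r₀) / (r - 1) := div_pos hrr0 hr1'
  refine ⟨c₀ ^ ((r - r₀) / (r - 1)), Real.rpow_pos_of_pos hc₀ _, ?_⟩
  intro w g hw hwA hg hσA hmax
  set s : ℝ := (r - r₀) / (r - 1) with hs_def
  set q : ℝ := r / (r - r₀) with hq_def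
  set r' : ℝ := r / (r - 1) with hr'_def
  have hq0 : (0:ℝ) < q := div_pos hr hrr0
  have hr'0 : (0:ℝ) < r' := div_pos hr hr1'
  have hsq : s * q = r' := by rw [hs_def, hq_def, hr'_def]; field_simp
  have h1q : (r - 1) / r * s = 1 / q := by rw [hs_def, hq_def]; field_simp
  have hr'1 : r' - 1 = 1 / (r - 1) := by rw [hr'_def]; field_simp; ring
  set h : Rn n → ℝ := fun y => (g y) ^ ((r - 1) / (r - r₀)) * w y with hh_def
  -- duality for the Ap constants
  have hdual : apConst n r' θ ρ (fun x => (w x) ^ (-(1:ℝ)/(r-1)))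
      ≤ (apConst n r θ ρ w) ^ ((1:ℝ)/(r-1)) := by
    simp only [apConst]
    refine iSup_le fun x => iSup_le fun t => iSup_le fun ht => ?_
    have h1t : (0:ℝ) < 1 + t / ρ x := by have := hρ x; positivity
    have hc0 : (0:ℝ) ≤ ((1 + t / ρ x) ^ θ * (volume (ball x t)).toReal)⁻¹ :=
      inv_nonneg.2 (mul_nonneg (Real.rpow_nonneg h1t.le θ) ENNReal.toReal_nonneg)
    have hA0 : (0:ℝ) ≤ ((1 + t / ρ x) ^ θ * (volume (ball x t)).toReal)⁻¹ *
        ∫ y in ball x t, w y :=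
      mul_nonneg hc0 (integral_nonneg fun y => hw y)
    have hB0 : (0:ℝ) ≤ ((1 + t / ρ x) ^ θ * (volume (ball x t)).toReal)⁻¹ *
        ∫ y in ball x t, (w y) ^ (-(1:ℝ)/(r-1)) :=
      mul_nonneg hc0 (integral_nonneg fun y => Real.rpow_nonneg (hw y) _)
    have happ : 0 ≤ apTerm n r θ ρ w x t :=
      mul_nonneg hA0 (Real.rpow_nonneg hB0 _)
    have hterm : apTerm n r' θ ρ (fun x => (w x) ^ (-(1:ℝ)/(r-1))) x t
        = apTerm n r θ ρ w x t ^ ((1:ℝ)/(r-1)) := by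
      have hσw : ∀ y : Rn n, ((w y) ^ (-(1:ℝ)/(r-1))) ^ (-(1:ℝ)/(r' - 1)) = w y := fun y => by
        rw [← Real.rpow_mul (hw y),
          show (-(1:ℝ)/(r-1)) * (-(1:ℝ)/(r'-1)) = 1 by rw [hr'1]; field_simp,
          Real.rpow_one]
      unfold apTerm
      simp only [hσw]
      simp only [hr'1]
      exact rdf_aux _ _ _ hA0 hB0 hr1'
    rw [hterm, ← ENNReal.ofReal_rpow_of_nonneg happ (by positivity)]
    refine ENNReal.rpow_le_rpow ?_ (by positivity)
    exact le_iSup_of_le x (le_iSup_of_le t (le_iSup_of_le ht le_rfl))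
  -- pointwise bound 1
  have pt1 : ∀ x : Rn n,
      ENNReal.ofReal |((adaptedMaximal n (r * θ) ρ h x).toReal * (w x)⁻¹) ^ s| ^ q *
        ENNReal.ofReal (w x)
      ≤ adaptedMaximal n (r * θ) ρ h x ^ r' *
        ENNReal.ofReal ((w x) ^ (-(1:ℝ)/(r-1))) := by
    intro x
    have ht0 : 0 ≤ (adaptedMaximal n (r * θ) ρ h x).toReal := ENNReal.toReal_nonneg
    have hwx := hw x
    have hb0 : 0 ≤ (adaptedMaximal n (r * θ) ρ h x).toReal * (w x)⁻¹ :=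
      mul_nonneg ht0 (inv_nonneg.2 hwx)
    rw [abs_of_nonneg (Real.rpow_nonneg hb0 s),
      ← ENNReal.ofReal_rpow_of_nonneg hb0 hs.le, ← ENNReal.rpow_mul, hsq,
      ENNReal.ofReal_mul ht0, ENNReal.mul_rpow_of_nonneg _ _ hr'0.le, mul_assoc]
    refine mul_le_mul' (ENNReal.rpow_le_rpow ENNReal.ofReal_toReal_le hr'0.le) ?_
    rcases eq_or_lt_of_le hwx with h0 | hpos
    · rw [← h0]; simp
    · have key : ((w x)⁻¹) ^ r' * (w x) = (w x) ^ (-(1:ℝ)/(r-1)) := by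
        rw [Real.inv_rpow hwx, ← Real.rpow_neg hwx]
        calc (w x) ^ (-r') * w x = (w x) ^ (-r') * (w x) ^ (1:ℝ) := by
              rw [Real.rpow_one]
          _ = (w x) ^ (-r' + 1) := (Real.rpow_add hpos _ _).symm
          _ = (w x) ^ (-(1:ℝ)/(r-1)) := by
              congr 1; rw [hr'_def]; field_simp; ring
      rw [← key, ENNReal.ofReal_mul (Real.rpow_nonneg (inv_nonneg.2 hwx) _),
        ENNReal.ofReal_rpow_of_nonneg (inv_nonneg.2 hwx) hr'0.le]
  -- pointwise bound 2
  have pt2 : ∀ x : Rn n,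
      ENNReal.ofReal |h x| ^ r' * ENNReal.ofReal ((w x) ^ (-(1:ℝ)/(r-1)))
      ≤ ENNReal.ofReal |g x| ^ q * ENNReal.ofReal (w x) := by
    intro x
    have hgx := hg x
    have hwx := hw x
    have ha0 : 0 ≤ (g x) ^ ((r-1)/(r-r₀)) := Real.rpow_nonneg hgx _
    simp only [hh_def]
    rw [abs_of_nonneg (mul_nonneg ha0 hwx), abs_of_nonneg hgx,
      ENNReal.ofReal_mul ha0, ENNReal.mul_rpow_of_nonneg _ _ hr'0.le,
      ENNReal.ofReal_rpow_of_nonneg ha0 hr'0.le, ← Real.rpow_mul hgx,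
      show (r-1)/(r-r₀) * r' = q by rw [hr'_def, hq_def]; field_simp,
      ENNReal.ofReal_rpow_of_nonneg hgx hq0.le, mul_assoc]
    refine mul_le_mul_right ?_ _
    rcases eq_or_lt_of_le hwx with h0 | hpos
    · rw [← h0]; simp [ENNReal.zero_rpow_of_pos hr'0]
    · have key : (w x) ^ r' * ((w x) ^ (-(1:ℝ)/(r-1))) = w x := by
        rw [← Real.rpow_add hpos,
          show r' + (-(1:ℝ))/(r-1) = 1 by rw [hr'_def]; field_simp; ring,
          Real.rpow_one]
      calc ENNReal.ofReal (w x) ^ r' * ENNReal.ofReal ((w x) ^ (-(1:ℝ)/(r-1)))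
          = ENNReal.ofReal ((w x) ^ r' * ((w x) ^ (-(1:ℝ)/(r-1)))) := by
            rw [ENNReal.ofReal_rpow_of_nonneg hwx hr'0.le,
              ← ENNReal.ofReal_mul (Real.rpow_nonneg hwx _)]
        _ = ENNReal.ofReal (w x) := by rw [key]
        _ ≤ ENNReal.ofReal (w x) := le_rfl
  -- assemble
  calc wNorm n q w (fun x => ((adaptedMaximal n (r * θ) ρ h x).toReal * (w x)⁻¹) ^ s)
      = (∫⁻ x, ENNReal.ofReal |((adaptedMaximal n (r * θ) ρ h x).toReal * (w x)⁻¹) ^ s| ^ q *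
          ENNReal.ofReal (w x)) ^ (1/q) := rfl
    _ ≤ (∫⁻ x, adaptedMaximal n (r * θ) ρ h x ^ r' *
          ENNReal.ofReal ((w x) ^ (-(1:ℝ)/(r-1)))) ^ (1/q) :=
        ENNReal.rpow_le_rpow (lintegral_mono pt1) (by positivity)
    _ = ((∫⁻ x, adaptedMaximal n (r * θ) ρ h x ^ r' *
          ENNReal.ofReal ((w x) ^ (-(1:ℝ)/(r-1)))) ^ ((r-1)/r)) ^ s := by
        rw [← ENNReal.rpow_mul, h1q]
    _ ≤ (ENNReal.ofReal c₀ *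
          apConst n r' θ ρ (fun x => (w x) ^ (-(1:ℝ)/(r-1))) ^ (1/(r'-1)) *
          (∫⁻ x, ENNReal.ofReal |h x| ^ r' *
            ENNReal.ofReal ((w x) ^ (-(1:ℝ)/(r-1)))) ^ ((r-1)/r)) ^ s :=
        ENNReal.rpow_le_rpow (hmax h) hs.le
    _ ≤ (ENNReal.ofReal c₀ *
          apConst n r' θ ρ (fun x => (w x) ^ (-(1:ℝ)/(r-1))) ^ (1/(r'-1)) *
          (∫⁻ x, ENNReal.ofReal |g x| ^ q * ENNReal.ofReal (w x)) ^ ((r-1)/r)) ^ s := by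
        refine ENNReal.rpow_le_rpow ?_ hs.le
        refine mul_le_mul_right ?_ _
        exact ENNReal.rpow_le_rpow (lintegral_mono pt2) (div_nonneg hr1'.le hr.le)
    _ = (ENNReal.ofReal c₀) ^ s *
          (apConst n r' θ ρ (fun x => (w x) ^ (-(1:ℝ)/(r-1))) ^ (1/(r'-1))) ^ s *
          ((∫⁻ x, ENNReal.ofReal |g x| ^ q * ENNReal.ofReal (w x)) ^ ((r-1)/r)) ^ s := by
        rw [ENNReal.mul_rpow_of_nonneg _ _ hs.le, ENNReal.mul_rpow_of_nonneg _ _ hs.le]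
    _ ≤ ENNReal.ofReal (c₀ ^ s) * apConst n r θ ρ w ^ s * wNorm n q w g := by
        rw [ENNReal.ofReal_rpow_of_nonneg hc₀.le hs.le]
        refine mul_le_mul' (mul_le_mul_right ?_ _) (le_of_eq ?_)
        swap
        · rw [← ENNReal.rpow_mul, h1q]; rfl
        refine ENNReal.rpow_le_rpow ?_ hs.le
        rw [show (1:ℝ)/(r'-1) = r - 1 by rw [hr'1]; field_simp]
        calc apConst n r' θ ρ (fun x => (w x) ^ (-(1:ℝ)/(r-1))) ^ (r-1)
            ≤ (apConst n r θ ρ w ^ ((1:ℝ)/(r-1))) ^ (r-1) :=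
              ENNReal.rpow_le_rpow hdual hr1'.le
          _ = apConst n r θ ρ w := by
              rw [← ENNReal.rpow_mul, one_div, inv_mul_cancel₀ hne, ENNReal.rpow_one]
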